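/- There is no matrix A ∈ SL(3,ℂ) such that A⁻¹·span{E₁₂, E₃₂}·A = span{E₂₃, E₂₁}, where the spans are taken as subspaces of the 3×3 complex matrices. -/

import Mathlib

open Matrix

theorem stmt_7 :
    ¬ ∃ A : Matrix.SpecialLinearGroup (Fin 3) ℂ,
      (fun X : Matrix (Fin 3) (Fin 3) ℂ =>
          (↑(A⁻¹) : Matrix (Fin 3) (Fin 3) ℂ) * X * (↑A : Matrix (Fin 3) (Fin 3) ℂ)) ''
          ((Submodule.span ℂ
              ({Matrix.single 0 1 (1 : ℂ), Matrix.single 2 1 (1 : ℂ)} :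
                Set (Matrix (Fin 3) (Fin 3) ℂ))) :
            Set (Matrix (Fin 3) (Fin 3) ℂ)) =
        ((Submodule.span ℂ
            ({Matrix.single 1 2 (1 : ℂ), Matrix.single 1 0 (1 : ℂ)} :
              Set (Matrix (Fin 3) (Fin 3) ℂ))) :
          Set (Matrix (Fin 3) (Fin 3) ℂ)) := by
  rintro ⟨A, hA⟩
  set B : Matrix (Fin 3) (Fin 3) ℂ := (↑(A⁻¹) : Matrix (Fin 3) (Fin 3) ℂ) with hB
  have h1 : B * Matrix.single 0 1 (1 : ℂ) * (↑A : Matrix (Fin 3) (Fin 3) ℂ) ∈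
      ((Submodule.span ℂ ({Matrix.single 1 2 (1 : ℂ), Matrix.single 1 0 (1 : ℂ)} :
          Set (Matrix (Fin 3) (Fin 3) ℂ))) : Set (Matrix (Fin 3) (Fin 3) ℂ)) := by
    rw [← hA]
    exact ⟨_, Submodule.subset_span (Set.mem_insert _ _), rfl⟩
  have h2 : B * Matrix.single 2 1 (1 : ℂ) * (↑A : Matrix (Fin 3) (Fin 3) ℂ) ∈
      ((Submodule.span ℂ ({Matrix.single 1 2 (1 : ℂ), Matrix.single 1 0 (1 : ℂ)} :
          Set (Matrix (Fin 3) (Fin 3) ℂ))) : Set (Matrix (Fin 3) (Fin 3) ℂ)) := by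
    rw [← hA]
    exact ⟨_, Submodule.subset_span (Set.mem_insert_of_mem _ (Set.mem_singleton _)), rfl⟩
  rw [SetLike.mem_coe, Submodule.mem_span_pair] at h1 h2
  obtain ⟨c, d, hcd⟩ := h1
  obtain ⟨c', d', hcd'⟩ := h2
  -- entries of the products
  have key1 : ∀ i j : Fin 3, i ≠ 1 → B i 0 * (↑A : Matrix (Fin 3) (Fin 3) ℂ) 1 j = 0 := by
    intro i j hi
    have := congrFun (congrFun hcd i) j
    simp [Matrix.mul_apply, Matrix.single, Fin.sum_univ_three, Matrix.add_apply,
      Matrix.smul_apply, hi] at this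
    rw [if_neg (fun h => hi h.1.symm), if_neg (fun h => hi h.1.symm), add_zero] at this
    exact this.symm
  have key2 : ∀ i j : Fin 3, i ≠ 1 → B i 2 * (↑A : Matrix (Fin 3) (Fin 3) ℂ) 1 j = 0 := by
    intro i j hi
    have := congrFun (congrFun hcd' i) j
    simp [Matrix.mul_apply, Matrix.single, Fin.sum_univ_three, Matrix.add_apply,
      Matrix.smul_apply, hi] at this
    rw [if_neg (fun h => hi h.1.symm), if_neg (fun h => hi h.1.symm), add_zero] at this
    exact this.symm
  have hdetA : (↑A : Matrix (Fin 3) (Fin 3) ℂ).det = 1 := A.2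
  have hrow : ∃ j : Fin 3, (↑A : Matrix (Fin 3) (Fin 3) ℂ) 1 j ≠ 0 := by
    by_contra h
    push_neg at h
    rw [Matrix.det_fin_three, h 0, h 1, h 2] at hdetA
    simp at hdetA
  obtain ⟨j, hj⟩ := hrow
  have b00 : B 0 0 = 0 := by
    rcases mul_eq_zero.1 (key1 0 j (by decide)) with h | h
    · exact h
    · exact absurd h hj
  have b20 : B 2 0 = 0 := by
    rcases mul_eq_zero.1 (key1 2 j (by decide)) with h | h
    · exact h
    · exact absurd h hj
  have b02 : B 0 2 = 0 := by
    rcases mul_eq_zero.1 (key2 0 j (by decide)) with h | h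
    · exact h
    · exact absurd h hj
  have b22 : B 2 2 = 0 := by
    rcases mul_eq_zero.1 (key2 2 j (by decide)) with h | h
    · exact h
    · exact absurd h hj
  have hdetB : B.det = 1 := (A⁻¹).2
  rw [Matrix.det_fin_three, b00, b20, b02, b22] at hdetB
  simp at hdetB
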